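/- Let (H_j)_{j≥0} be the monic Hermite polynomials, i.e. H_j is monic of degree j and ∫_ℝ H_i(x)·H_j(x)·e^{−x²/2} dx = √(2π)·i!·j!·δ_{ij} / √(i!·j!) — equivalently ∫_ℝ H_i H_j e^{−x²/2} dx = √(2π)·i!·δ_{ij}. Then for all n ≥ 1, r ∈ {1,…,n−1}, s ∈ {1,…,n} and u, v ∈ ℝ: Σ_{j=n−s}^{n−1} (1/(√(2π)·j!))·H_j^{(n−s)}(v)·∫_u^∞ ((x − u)^{n−r−1}/(n−r−1)!)·H_j(x)·e^{−x²/2} dx = Σ_{j=−min(r,s)}^{−1} (1/(√(2π)·(j+s)!))·H_{j+r}(u)·H_{j+s}(v)·e^{−u²/2} + 1_{s > r}·Σ_{j=−s}^{−r−1} (H_{j+s}(v)/(√(2π)·(j+s)!))·∫_u^∞ ((x − u)^{−j−r−1}/(−j−r−1)!)·e^{−x²/2} dx, where H_j^{(i)} denotes the i-th derivative of H_j. -/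

import Mathlib

open MeasureTheory Polynomial Real Filter Set

noncomputable def He (n : ℕ) : Polynomial ℝ := (Polynomial.hermite n).map (Int.castRingHom ℝ)

lemma He_zero : He 0 = 1 := by simp [He, hermite_zero]

lemma He_succ (n : ℕ) : He (n + 1) = X * He n - derivative (He n) := by
  simp [He, hermite_succ, Polynomial.derivative_map, Polynomial.map_mul]

lemma He_monic (n : ℕ) : (He n).Monic := (hermite_monic n).map _

lemma He_natDegree (n : ℕ) : (He n).natDegree = n := by
  rw [He, (hermite_monic n).natDegree_map, natDegree_hermite]

lemma dHe_succ : ∀ n : ℕ, derivative (He (n + 1)) = C ((n : ℝ) + 1) * He n := by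
  intro n
  induction n with
  | zero => simp [He_succ, He_zero]
  | succ m IH =>
    rw [He_succ (m + 1), derivative_sub, derivative_mul, derivative_X, one_mul, IH,
      derivative_C_mul]
    have hd : derivative (He m) = X * He m - He (m + 1) := by rw [He_succ]; ring
    rw [hd]
    push_cast
    have hC : (C ((m:ℝ)+1+1) : Polynomial ℝ) = C ((m:ℝ)+1) + 1 := by
      rw [show ((m:ℝ)+1+1) = ((m:ℝ)+1) + 1 by ring, C_add, C_1]
    rw [hC]
    ring

lemma dHe (n : ℕ) : derivative (He n) = C (n : ℝ) * He (n - 1) := by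
  cases n with
  | zero => simp [He_zero]
  | succ m => rw [dHe_succ m]; push_cast; simp

lemma dHe_iter : ∀ (t n : ℕ), derivative^[t] (He n) = C ((n.descFactorial t : ℕ) : ℝ) * He (n - t) := by
  intro t
  induction t with
  | zero => intro n; simp
  | succ s IH =>
    intro n
    rw [Function.iterate_succ_apply, dHe, iterate_derivative_C_mul, IH, ← mul_assoc, ← C_mul]
    congr 2
    · cases n with
      | zero => simp
      | succ m =>
        rw [Nat.succ_descFactorial_succ]
        push_cast
        simp
    · omega

lemma integrable_pow_gauss (k : ℕ) :
    Integrable fun x : ℝ => x ^ k * Real.exp (-x ^ 2 / 2) := by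
  have h := integrable_rpow_mul_exp_neg_mul_sq (b := 1/2) (by norm_num)
    (s := (k : ℝ)) (lt_of_lt_of_le neg_one_lt_zero (Nat.cast_nonneg k))
  have he : (fun x : ℝ => x ^ (k : ℝ) * Real.exp (-(1/2) * x ^ 2))
      = fun x : ℝ => x ^ k * Real.exp (-x ^ 2 / 2) := by
    funext x
    rw [Real.rpow_natCast, show -(1/2 : ℝ) * x ^ 2 = -x ^ 2 / 2 by ring]
  rwa [he] at h

lemma integrable_poly_gauss (p : Polynomial ℝ) :
    Integrable fun x : ℝ => p.eval x * Real.exp (-x ^ 2 / 2) := by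
  have he : (fun x : ℝ => p.eval x * Real.exp (-x ^ 2 / 2))
      = fun x : ℝ => ∑ i ∈ Finset.range (p.natDegree + 1),
          p.coeff i * (x ^ i * Real.exp (-x ^ 2 / 2)) := by
    funext x
    rw [Polynomial.eval_eq_sum_range, Finset.sum_mul]
    simp [mul_assoc]
  rw [he]
  exact integrable_finset_sum _ fun i _ => (integrable_pow_gauss i).const_mul _

lemma tendsto_pow_gauss_atTop (k : ℕ) :
    Tendsto (fun x : ℝ => x ^ k * Real.exp (-x ^ 2 / 2)) atTop (nhds 0) := by
  have h1 : Tendsto (fun x : ℝ => x ^ k * Real.exp (-x)) atTop (nhds 0) :=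
    tendsto_pow_mul_exp_neg_atTop_nhds_zero k
  have h2 : Tendsto (fun x : ℝ => Real.exp (x - x ^ 2 / 2)) atTop (nhds 0) := by
    apply Real.tendsto_exp_atBot.comp
    apply tendsto_atBot_mono' atTop (f₁ := fun x : ℝ => -x)
      (by filter_upwards [Filter.eventually_ge_atTop (4 : ℝ)] with x hx; nlinarith)
    exact tendsto_neg_atTop_atBot
  have := h1.mul h2
  rw [mul_zero] at this
  apply this.congr
  intro x
  rw [mul_assoc, ← Real.exp_add]
  congr 1
  ring

lemma tendsto_poly_gauss_atTop (p : Polynomial ℝ) :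
    Tendsto (fun x : ℝ => p.eval x * Real.exp (-x ^ 2 / 2)) atTop (nhds 0) := by
  have he : ∀ x : ℝ, p.eval x * Real.exp (-x ^ 2 / 2)
      = ∑ i ∈ Finset.range (p.natDegree + 1),
          p.coeff i * (x ^ i * Real.exp (-x ^ 2 / 2)) := by
    intro x
    rw [Polynomial.eval_eq_sum_range, Finset.sum_mul]
    simp [mul_assoc]
  have h : Tendsto (fun x : ℝ => ∑ i ∈ Finset.range (p.natDegree + 1),
      p.coeff i * (x ^ i * Real.exp (-x ^ 2 / 2))) atTop
      (nhds (∑ i ∈ Finset.range (p.natDegree + 1), p.coeff i * 0)) := by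
    apply tendsto_finset_sum
    intro i _
    exact (tendsto_pow_gauss_atTop i).const_mul _
  simp only [mul_zero, Finset.sum_const_zero] at h
  exact h.congr fun x => (he x).symm

lemma tendsto_poly_gauss_atBot (p : Polynomial ℝ) :
    Tendsto (fun x : ℝ => p.eval x * Real.exp (-x ^ 2 / 2)) atBot (nhds 0) := by
  have h := (tendsto_poly_gauss_atTop (p.comp (-X))).comp tendsto_neg_atBot_atTop
  apply h.congr
  intro x
  simp [Function.comp, Polynomial.eval_comp, neg_sq]

lemma hasDerivAt_poly_gauss (q : Polynomial ℝ) (x : ℝ) :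
    HasDerivAt (fun y : ℝ => q.eval y * Real.exp (-y ^ 2 / 2))
      ((derivative q - X * q).eval x * Real.exp (-x ^ 2 / 2)) x := by
  have h1 : HasDerivAt (fun y : ℝ => q.eval y) ((derivative q).eval x) x :=
    q.hasDerivAt x
  have hx : HasDerivAt (fun y : ℝ => -y ^ 2 / 2) (-x) x := by
    have := ((hasDerivAt_pow 2 x).neg).div_const 2
    refine this.congr_deriv ?_
    simp
    ring
  have h2 : HasDerivAt (fun y : ℝ => Real.exp (-y ^ 2 / 2))
      (Real.exp (-x ^ 2 / 2) * (-x)) x := (Real.hasDerivAt_exp _).comp x hx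
  have := h1.mul h2
  refine this.congr_deriv ?_
  simp only [Polynomial.eval_sub, Polynomial.eval_mul, Polynomial.eval_X]
  ring

noncomputable def IwP (p : Polynomial ℝ) : ℝ := ∫ x : ℝ, p.eval x * Real.exp (-x ^ 2 / 2)

lemma IwP_add (p q : Polynomial ℝ) : IwP (p + q) = IwP p + IwP q := by
  unfold IwP
  rw [← integral_add (integrable_poly_gauss p) (integrable_poly_gauss q)]
  congr 1; funext x; simp [add_mul]

lemma IwP_sub (p q : Polynomial ℝ) : IwP (p - q) = IwP p - IwP q := by
  unfold IwP
  rw [← integral_sub (integrable_poly_gauss p) (integrable_poly_gauss q)]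
  congr 1; funext x; simp [sub_mul]

lemma IwP_Cmul (c : ℝ) (p : Polynomial ℝ) : IwP (C c * p) = c * IwP p := by
  unfold IwP
  rw [← integral_const_mul]
  congr 1; funext x; simp [mul_assoc]

lemma IwP_zero : IwP 0 = 0 := by simp [IwP]

lemma key1 (q : Polynomial ℝ) (j : ℕ) :
    IwP (q * He (j + 1)) = IwP (derivative q * He j) := by
  set F' : Polynomial ℝ := derivative (q * He j) - X * (q * He j) with hF'
  have hderiv : ∀ x : ℝ, HasDerivAt (fun y : ℝ => (q * He j).eval y * Real.exp (-y ^ 2 / 2))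
      (F'.eval x * Real.exp (-x ^ 2 / 2)) x := fun x => hasDerivAt_poly_gauss _ x
  have h0 : IwP F' = 0 - 0 :=
    integral_of_hasDerivAt_of_tendsto hderiv (integrable_poly_gauss F')
      (tendsto_poly_gauss_atBot _) (tendsto_poly_gauss_atTop _)
  have hid : F' = derivative q * He j - q * He (j + 1) := by
    rw [hF', derivative_mul, He_succ]
    ring
  rw [hid, IwP_sub] at h0
  linarith

lemma key2 : ∀ (j : ℕ) (q : Polynomial ℝ), IwP (q * He j) = IwP (derivative^[j] q) := by
  intro j
  induction j with
  | zero => intro q; simp [He_zero]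
  | succ m IH =>
    intro q
    rw [key1 q m, IH (derivative q), Function.iterate_succ_apply]

lemma IwP_one : IwP 1 = Real.sqrt (2 * Real.pi) := by
  have h := integral_gaussian (1/2)
  rw [show Real.pi / (1/2) = 2 * Real.pi by ring] at h
  unfold IwP
  rw [← h]
  congr 1; funext x
  rw [show -(1/2 : ℝ) * x ^ 2 = -x ^ 2 / 2 by ring]
  simp

lemma He_orth (i j : ℕ) : IwP (He i * He j)
    = if i = j then Real.sqrt (2 * Real.pi) * (Nat.factorial i) else 0 := by
  rcases lt_trichotomy i j with h | h | h
  · rw [if_neg h.ne, key2, iterate_derivative_eq_zero (by rw [He_natDegree]; exact h), IwP_zero]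
  · subst h
    rw [if_pos rfl, key2, dHe_iter, Nat.descFactorial_self, Nat.sub_self, He_zero, mul_one,
      show (C ((i.factorial : ℕ) : ℝ)) = C ((i.factorial : ℕ) : ℝ) * 1 from (mul_one _).symm,
      IwP_Cmul, IwP_one, mul_comm]
  · rw [if_neg h.ne', mul_comm, key2,
      iterate_derivative_eq_zero (by rw [He_natDegree]; exact h), IwP_zero]

lemma H_unique (H : ℕ → Polynomial ℝ)
    (hmonic : ∀ j, (H j).Monic) (hdeg : ∀ j, (H j).natDegree = j)
    (horth : ∀ i j : ℕ,
      (∫ x : ℝ, (H i).eval x * (H j).eval x * Real.exp (-x ^ 2 / 2))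
        = if i = j then Real.sqrt (2 * Real.pi) * (Nat.factorial i) else 0) :
    ∀ j, H j = He j := by
  have horth' : ∀ i j : ℕ, IwP (H i * H j)
      = if i = j then Real.sqrt (2 * Real.pi) * (Nat.factorial i) else 0 := by
    intro i j
    rw [← horth i j]
    unfold IwP
    congr 1; funext x; rw [Polynomial.eval_mul]
  have hH0 : H 0 = 1 := (hmonic 0).natDegree_eq_zero.mp (hdeg 0)
  intro j
  set d : Polynomial ℝ := H j - He j with hdd
  by_cases hd0 : d = 0
  · have := sub_eq_zero.mp hd0; exact this
  -- d ≠ 0 : derive contradiction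
  exfalso
  have hdegd : d.natDegree < j := by
    have h1 : d.degree < (H j).degree := by
      apply degree_sub_lt
      · rw [degree_eq_natDegree (hmonic j).ne_zero, degree_eq_natDegree (He_monic j).ne_zero,
          hdeg j, He_natDegree j]
      · exact (hmonic j).ne_zero
      · rw [(hmonic j).leadingCoeff, (He_monic j).leadingCoeff]
    have := natDegree_lt_natDegree hd0 h1
    rwa [hdeg j] at this
  -- orthogonality of d against H i, i < j
  have hd_orth : ∀ i, i < j → IwP (H i * d) = 0 := by
    intro i hij
    rw [hdd, mul_sub, IwP_sub, horth' i j, if_neg hij.ne, key2,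
      iterate_derivative_eq_zero (by rw [hdeg i]; exact hij), IwP_zero, sub_zero]
  -- every polynomial of natDegree < j is orthogonal to d
  have claim : ∀ N : ℕ, ∀ p : Polynomial ℝ, p.natDegree ≤ N → p.natDegree < j →
      IwP (p * d) = 0 := by
    intro N
    induction N with
    | zero =>
      intro p hp hpj
      rw [eq_C_of_natDegree_le_zero hp,
        show (C (p.coeff 0) : Polynomial ℝ) * d = C (p.coeff 0) * (H 0 * d) by
          rw [hH0, one_mul], IwP_Cmul, hd_orth 0 (by omega), mul_zero]
    | succ N IH =>
      intro p hp hpj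
      by_cases hp0 : p = 0
      · rw [hp0, zero_mul, IwP_zero]
      set r : Polynomial ℝ := p - C p.leadingCoeff * H p.natDegree with hrr
      have hpd : p * d = C p.leadingCoeff * (H p.natDegree * d) + r * d := by
        rw [hrr]; ring
      have hmain : IwP (C p.leadingCoeff * (H p.natDegree * d)) = 0 := by
        rw [IwP_Cmul, hd_orth p.natDegree hpj, mul_zero]
      rw [hpd, IwP_add, hmain, zero_add]
      by_cases hr0 : r = 0
      · rw [hr0, zero_mul, IwP_zero]
      have hrdeg : r.natDegree < p.natDegree := by
        apply natDegree_lt_natDegree hr0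
        apply degree_sub_lt
        · rw [degree_C_mul (by simpa [leadingCoeff_eq_zero] using hp0),
            degree_eq_natDegree hp0, degree_eq_natDegree (hmonic p.natDegree).ne_zero, hdeg]
        · exact hp0
        · rw [leadingCoeff_mul, (hmonic p.natDegree).leadingCoeff, mul_one, leadingCoeff_C]
      exact IH r (by omega) (lt_trans hrdeg hpj)
  have hzero : IwP (d * d) = 0 := claim d.natDegree d le_rfl hdegd
  -- conclude d = 0
  apply hd0
  have hnn : 0 ≤ fun x : ℝ => (d * d).eval x * Real.exp (-x ^ 2 / 2) := by
    intro x
    simp only [Polynomial.eval_mul]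
    exact mul_nonneg (mul_self_nonneg _) (Real.exp_pos _).le
  have hae := (integral_eq_zero_iff_of_nonneg hnn (integrable_poly_gauss _)).mp hzero
  have hcont : Continuous fun x : ℝ => (d * d).eval x * Real.exp (-x ^ 2 / 2) := by
    apply ((d * d).continuous).mul
    exact Real.continuous_exp.comp (by continuity)
  have heq : (fun x : ℝ => (d * d).eval x * Real.exp (-x ^ 2 / 2)) = fun _ => 0 :=
    (hcont.ae_eq_iff_eq volume continuous_const).mp hae
  have hdx : ∀ x : ℝ, d.eval x = 0 := by
    intro x
    have := congrFun heq x
    simp only [Polynomial.eval_mul] at this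
    have h2 := (mul_eq_zero.mp this).resolve_right (Real.exp_ne_zero _)
    exact mul_self_eq_zero.mp h2
  exact Polynomial.funext fun x => by simp [hdx x]

noncomputable def Jint (u : ℝ) (m j : ℕ) : ℝ :=
  ∫ x in Set.Ioi u, ((x - u) ^ m / (Nat.factorial m)) * (He j).eval x * Real.exp (-x ^ 2 / 2)

noncomputable def Kint (u : ℝ) (m : ℕ) : ℝ :=
  ∫ x in Set.Ioi u, ((x - u) ^ m / (Nat.factorial m)) * Real.exp (-x ^ 2 / 2)

lemma Jint_zero_right (u : ℝ) (m : ℕ) : Jint u m 0 = Kint u m := by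
  unfold Jint Kint
  congr 1; funext x
  rw [He_zero]
  simp

noncomputable def Pm (u : ℝ) (m : ℕ) (j : ℕ) : Polynomial ℝ :=
  C (((Nat.factorial m : ℕ) : ℝ))⁻¹ * ((X - C u) ^ m * He j)

lemma Pm_eval (u : ℝ) (m j : ℕ) (x : ℝ) :
    (Pm u m j).eval x = ((x - u) ^ m / (Nat.factorial m)) * (He j).eval x := by
  simp [Pm]
  ring

lemma hasDerivAt_He_gauss (j : ℕ) (x : ℝ) :
    HasDerivAt (fun y : ℝ => (He j).eval y * Real.exp (-y ^ 2 / 2))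
      (-((He (j + 1)).eval x * Real.exp (-x ^ 2 / 2))) x := by
  have h := hasDerivAt_poly_gauss (He j) x
  have hq : derivative (He j) - X * He j = -He (j + 1) := by rw [He_succ]; ring
  rw [hq] at h
  simpa using h

lemma Jint_base (u : ℝ) (j : ℕ) :
    Jint u 0 (j + 1) = (He j).eval u * Real.exp (-u ^ 2 / 2) := by
  have hderiv : ∀ x ∈ Set.Ici u,
      HasDerivAt (fun y : ℝ => -((He j).eval y * Real.exp (-y ^ 2 / 2)))
        ((He (j + 1)).eval x * Real.exp (-x ^ 2 / 2)) x := by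
    intro x _
    exact (hasDerivAt_He_gauss j x).neg.congr_deriv (neg_neg _)
  have htop : Tendsto (fun y : ℝ => -((He j).eval y * Real.exp (-y ^ 2 / 2))) atTop (nhds 0) := by
    simpa using (tendsto_poly_gauss_atTop (He j)).neg
  have h := integral_Ioi_of_hasDerivAt_of_tendsto' hderiv
    ((integrable_poly_gauss (He (j + 1))).integrableOn) htop
  unfold Jint
  rw [show (∫ x in Set.Ioi u,
      ((x - u) ^ 0 / ((Nat.factorial 0 : ℕ) : ℝ)) * (He (j + 1)).eval x * Real.exp (-x ^ 2 / 2))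
      = ∫ x in Set.Ioi u, (He (j + 1)).eval x * Real.exp (-x ^ 2 / 2) by
    congr 1; funext x; simp]
  rw [h]
  ring

lemma Jint_step (u : ℝ) (m j : ℕ) : Jint u (m + 1) (j + 1) = Jint u m j := by
  set F : ℝ → ℝ := fun y =>
    -(((y - u) ^ (m + 1) / ((Nat.factorial (m + 1) : ℕ) : ℝ)) *
      ((He j).eval y * Real.exp (-y ^ 2 / 2))) with hF
  set G : ℝ → ℝ := fun x =>
    -(((x - u) ^ m / ((Nat.factorial m : ℕ) : ℝ)) * (He j).eval x * Real.exp (-x ^ 2 / 2)) +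
      ((x - u) ^ (m + 1) / ((Nat.factorial (m + 1) : ℕ) : ℝ)) * (He (j + 1)).eval x *
        Real.exp (-x ^ 2 / 2) with hG
  have hderiv : ∀ x ∈ Set.Ici u, HasDerivAt F (G x) x := by
    intro x _
    have h1 : HasDerivAt (fun y : ℝ => (y - u) ^ (m + 1) / ((Nat.factorial (m + 1) : ℕ) : ℝ))
        ((x - u) ^ m / ((Nat.factorial m : ℕ) : ℝ)) x := by
      have hb : HasDerivAt (fun y : ℝ => (y - u) ^ (m + 1))
          (((m : ℝ) + 1) * (x - u) ^ m) x := by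
        have := ((hasDerivAt_id x).sub_const u).pow (m + 1)
        exact this.congr_deriv (by simp)
      have := hb.div_const ((Nat.factorial (m + 1) : ℕ) : ℝ)
      refine this.congr_deriv ?_
      rw [Nat.factorial_succ]
      push_cast
      rw [div_eq_div_iff (by positivity) (by positivity)]
      ring
    have h2 := hasDerivAt_He_gauss j x
    have := (h1.mul h2).neg
    refine this.congr_deriv ?_
    rw [hG]
    ring
  have htop : Tendsto F atTop (nhds 0) := by
    have h := (tendsto_poly_gauss_atTop (Pm u (m + 1) j)).neg
    rw [neg_zero] at h
    apply h.congr
    intro x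
    rw [hF]
    simp only [Pm_eval]
    ring
  have hGpoly : ∀ x : ℝ, G x = (-(Pm u m j) + Pm u (m + 1) (j + 1)).eval x *
      Real.exp (-x ^ 2 / 2) := by
    intro x
    simp only [hG, Polynomial.eval_add, Polynomial.eval_neg, Pm_eval]
    ring
  have hGint : IntegrableOn G (Set.Ioi u) := by
    rw [show G = fun x => (-(Pm u m j) + Pm u (m + 1) (j + 1)).eval x *
        Real.exp (-x ^ 2 / 2) from funext hGpoly]
    exact (integrable_poly_gauss _).integrableOn
  have h := integral_Ioi_of_hasDerivAt_of_tendsto' hderiv hGint htop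
  have hFu : F u = 0 := by rw [hF]; simp
  rw [hFu, sub_zero] at h
  have hsplit : ∫ x in Set.Ioi u, G x =
      -(Jint u m j) + Jint u (m + 1) (j + 1) := by
    unfold Jint
    have hA : Integrable (fun x : ℝ => ((x - u) ^ m / ((Nat.factorial m : ℕ) : ℝ)) *
        (He j).eval x * Real.exp (-x ^ 2 / 2)) (volume.restrict (Set.Ioi u)) := by
      rw [show (fun x : ℝ => ((x - u) ^ m / ((Nat.factorial m : ℕ) : ℝ)) * (He j).eval x *
          Real.exp (-x ^ 2 / 2)) = fun x => (Pm u m j).eval x * Real.exp (-x ^ 2 / 2) by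
        funext x; rw [Pm_eval]]
      exact (integrable_poly_gauss _).integrableOn
    have hB : Integrable (fun x : ℝ => ((x - u) ^ (m + 1) / ((Nat.factorial (m + 1) : ℕ) : ℝ)) *
        (He (j + 1)).eval x * Real.exp (-x ^ 2 / 2)) (volume.restrict (Set.Ioi u)) := by
      rw [show (fun x : ℝ => ((x - u) ^ (m + 1) / ((Nat.factorial (m + 1) : ℕ) : ℝ)) *
          (He (j + 1)).eval x * Real.exp (-x ^ 2 / 2))
          = fun x => (Pm u (m + 1) (j + 1)).eval x * Real.exp (-x ^ 2 / 2) by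
        funext x; rw [Pm_eval]]
      exact (integrable_poly_gauss _).integrableOn
    have hA' : Integrable (fun x : ℝ => -(((x - u) ^ m / ((Nat.factorial m : ℕ) : ℝ)) *
        (He j).eval x * Real.exp (-x ^ 2 / 2))) (volume.restrict (Set.Ioi u)) := by
      exact hA.neg
    rw [← integral_neg, ← integral_add hA' hB]
  rw [hsplit] at h
  linarith

lemma Jint_shift (u : ℝ) (m j : ℕ) : ∀ t : ℕ, Jint u (m + t) (j + t) = Jint u m j := by
  intro t
  induction t with
  | zero => rfl
  | succ s IH => rw [show m + (s + 1) = (m + s) + 1 by ring, show j + (s + 1) = (j + s) + 1 by ring,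
      Jint_step, IH]

lemma Jint_high (u : ℝ) (m j : ℕ) (h : m + 1 ≤ j) :
    Jint u m j = (He (j - m - 1)).eval u * Real.exp (-u ^ 2 / 2) := by
  have h2 := Jint_shift u 0 (j - m - 1 + 1) m
  rw [show 0 + m = m from by omega, show (j - m - 1 + 1) + m = j from by omega] at h2
  rw [h2, Jint_base]

lemma Jint_low (u : ℝ) (m j : ℕ) (h : j ≤ m) : Jint u m j = Kint u (m - j) := by
  have h2 := Jint_shift u (m - j) 0 j
  rw [show m - j + j = m from by omega, show 0 + j = j from by omega] at h2
  rw [h2, Jint_zero_right]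

theorem stmt18 (H : ℕ → Polynomial ℝ)
    (hmonic : ∀ j, (H j).Monic) (hdeg : ∀ j, (H j).natDegree = j)
    (horth : ∀ i j : ℕ,
      (∫ x : ℝ, (H i).eval x * (H j).eval x * Real.exp (-x ^ 2 / 2))
        = if i = j then Real.sqrt (2 * Real.pi) * (Nat.factorial i) else 0)
    (n r s : ℕ) (hn : 1 ≤ n) (hr : 1 ≤ r) (hr' : r ≤ n - 1) (hs : 1 ≤ s) (hs' : s ≤ n)
    (u v : ℝ) :
    (∑ j ∈ Finset.Ico (n - s) n,
      (1 / (Real.sqrt (2 * Real.pi) * (Nat.factorial j))) *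
        (derivative^[n - s] (H j)).eval v *
        ∫ x in Set.Ioi u,
          ((x - u) ^ (n - r - 1) / (Nat.factorial (n - r - 1))) * (H j).eval x *
            Real.exp (-x ^ 2 / 2))
    = (∑ j ∈ Finset.Icc (-(min r s : ℤ)) (-1 : ℤ),
        (1 / (Real.sqrt (2 * Real.pi) * (Nat.factorial (j + (s : ℤ)).toNat))) *
          (H ((j + (r : ℤ)).toNat)).eval u * (H ((j + (s : ℤ)).toNat)).eval v *
          Real.exp (-u ^ 2 / 2))
      + (if r < s then
          ∑ j ∈ Finset.Icc (-(s : ℤ)) (-(r : ℤ) - 1),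
            ((H ((j + (s : ℤ)).toNat)).eval v /
                (Real.sqrt (2 * Real.pi) * (Nat.factorial (j + (s : ℤ)).toNat))) *
              ∫ x in Set.Ioi u,
                ((x - u) ^ ((-j - (r : ℤ) - 1).toNat) /
                    (Nat.factorial ((-j - (r : ℤ) - 1).toNat))) * Real.exp (-x ^ 2 / 2)
        else 0) := by
  have hHe : H = He := funext (H_unique H hmonic hdeg horth)
  subst hHe
  rw [Finset.sum_Ico_eq_sum_range, show n - (n - s) = s from by omega]
  have step : ∑ x ∈ Finset.range s,
      (1 / (Real.sqrt (2 * Real.pi) * (Nat.factorial (n - s + x)))) *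
        (derivative^[n - s] (He (n - s + x))).eval v *
        (∫ y in Set.Ioi u,
          ((y - u) ^ (n - r - 1) / (Nat.factorial (n - r - 1))) * (He (n - s + x)).eval y *
            Real.exp (-y ^ 2 / 2))
      = ∑ k ∈ Finset.range s,
        (1 / (Real.sqrt (2 * Real.pi) * (Nat.factorial k))) * (He k).eval v *
          Jint u (n - r - 1) (n - s + k) := by
    refine Finset.sum_congr rfl fun k hk => ?_
    rw [dHe_iter, show n - s + k - (n - s) = k from by omega, Polynomial.eval_mul,
      Polynomial.eval_C]
    rw [show (∫ y in Set.Ioi u,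
        ((y - u) ^ (n - r - 1) / (Nat.factorial (n - r - 1))) * (He (n - s + k)).eval y *
          Real.exp (-y ^ 2 / 2)) = Jint u (n - r - 1) (n - s + k) from rfl]
    have hfac : (Nat.factorial k) * ((n - s + k).descFactorial (n - s)) =
        (Nat.factorial (n - s + k)) := by
      have h := Nat.factorial_mul_descFactorial (n := n - s + k) (k := n - s) (by omega)
      rwa [show n - s + k - (n - s) = k from by omega] at h
    have hc : (1 / (Real.sqrt (2 * Real.pi) * ((Nat.factorial (n - s + k) : ℕ) : ℝ))) *
        (((n - s + k).descFactorial (n - s) : ℕ) : ℝ)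
        = 1 / (Real.sqrt (2 * Real.pi) * ((Nat.factorial k : ℕ) : ℝ)) := by
      have hsq : (0 : ℝ) < Real.sqrt (2 * Real.pi) := Real.sqrt_pos.mpr (by positivity)
      rw [div_mul_eq_mul_div, one_mul, div_eq_div_iff (by positivity) (by positivity)]
      rw [one_mul, ← hfac]
      push_cast
      ring
    calc (1 / (Real.sqrt (2 * Real.pi) * ((Nat.factorial (n - s + k) : ℕ) : ℝ))) *
          ((((n - s + k).descFactorial (n - s) : ℕ) : ℝ) * (He k).eval v) *
          Jint u (n - r - 1) (n - s + k)
        = ((1 / (Real.sqrt (2 * Real.pi) * ((Nat.factorial (n - s + k) : ℕ) : ℝ))) *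
          (((n - s + k).descFactorial (n - s) : ℕ) : ℝ)) * (He k).eval v *
          Jint u (n - r - 1) (n - s + k) := by ring
      _ = _ := by rw [hc]
  rw [step]
  set t : ℕ := s - min r s with htdef
  rw [Finset.range_eq_Ico, ← Finset.sum_Ico_consecutive _ (Nat.zero_le t)
    (show t ≤ s from by omega)]
  have hpiece2 : ∑ k ∈ Finset.Ico t s,
      (1 / (Real.sqrt (2 * Real.pi) * (Nat.factorial k))) * (He k).eval v *
        Jint u (n - r - 1) (n - s + k)
      = ∑ j ∈ Finset.Icc (-(min r s : ℤ)) (-1 : ℤ),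
        (1 / (Real.sqrt (2 * Real.pi) * (Nat.factorial (j + (s : ℤ)).toNat))) *
          (He ((j + (r : ℤ)).toNat)).eval u * (He ((j + (s : ℤ)).toNat)).eval v *
          Real.exp (-u ^ 2 / 2) := by
    refine Finset.sum_bij' (fun k _ => (k : ℤ) - s) (fun z _ => (z + s).toNat) ?_ ?_ ?_ ?_ ?_
    · intro a ha
      simp only [Finset.mem_Ico] at ha
      simp only [Finset.mem_Icc]
      omega
    · intro z hz
      simp only [Finset.mem_Icc] at hz
      simp only [Finset.mem_Ico]
      omega
    · intro a ha
      beta_reduce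
      omega
    · intro z hz
      simp only [Finset.mem_Icc] at hz
      beta_reduce
      omega
    · intro k hk
      simp only [Finset.mem_Ico] at hk
      rw [Jint_high u (n - r - 1) (n - s + k) (by omega)]
      rw [show n - s + k - (n - r - 1) - 1 = ((k : ℤ) - (s : ℤ) + (r : ℤ)).toNat from by omega,
        show ((k : ℤ) - (s : ℤ) + (s : ℤ)).toNat = k from by omega]
      ring
  have hpiece1 : ∑ k ∈ Finset.Ico 0 t,
      (1 / (Real.sqrt (2 * Real.pi) * (Nat.factorial k))) * (He k).eval v *
        Jint u (n - r - 1) (n - s + k)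
      = (if r < s then
          ∑ j ∈ Finset.Icc (-(s : ℤ)) (-(r : ℤ) - 1),
            ((He ((j + (s : ℤ)).toNat)).eval v /
                (Real.sqrt (2 * Real.pi) * (Nat.factorial (j + (s : ℤ)).toNat))) *
              ∫ x in Set.Ioi u,
                ((x - u) ^ ((-j - (r : ℤ) - 1).toNat) /
                    (Nat.factorial ((-j - (r : ℤ) - 1).toNat))) * Real.exp (-x ^ 2 / 2)
        else 0) := by
    by_cases hrs : r < s
    · rw [if_pos hrs]
      refine Finset.sum_bij' (fun k _ => (k : ℤ) - s) (fun z _ => (z + s).toNat) ?_ ?_ ?_ ?_ ?_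
      · intro a ha
        simp only [Finset.mem_Ico] at ha
        simp only [Finset.mem_Icc]
        omega
      · intro z hz
        simp only [Finset.mem_Icc] at hz
        simp only [Finset.mem_Ico]
        omega
      · intro a ha
        beta_reduce
        omega
      · intro z hz
        simp only [Finset.mem_Icc] at hz
        beta_reduce
        omega
      · intro k hk
        simp only [Finset.mem_Ico] at hk
        rw [Jint_low u (n - r - 1) (n - s + k) (by omega)]
        rw [show n - r - 1 - (n - s + k) = (-((k : ℤ) - (s : ℤ)) - (r : ℤ) - 1).toNat from by omega,
          show ((k : ℤ) - (s : ℤ) + (s : ℤ)).toNat = k from by omega]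
        unfold Kint
        ring
    · rw [if_neg hrs, show t = 0 from by omega, Finset.Ico_self, Finset.sum_empty]
  rw [hpiece1, hpiece2]
  exact add_comm _ _
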